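/- Let m ≥ 1 and 0 < r₂ ≤ r₁ be real numbers, and let n₁, n₂ be reals with 0 ≤ n₁ ≤ √m, n₂ ≥ 0 and n₁ + n₂ > 0. Then (min{m, n₂}·r₂ + min{n₁, (m − n₂)⁺}·r₁) / (min{m, n₁}·r₁ + min{n₂, (m − n₁)⁺}·r₂) ≥ 1 − √m·(r₁ − r₂)/(√m·r₁ + (m − √m)·r₂). -/

import Mathlib

/-- Part 2 of the proof of the paper's Lemma 2 (region `R₁`, `n₁ ≤ √m`): the
reward of the policy protecting type 2 (accept all type-2 agents up to
capacity `m`, then type-1 agents with the remaining resource) over the optimal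
clairvoyant reward is at least `1 - √m(r₁-r₂)/(√m r₁ + (m-√m) r₂)`. -/
theorem region_one_bad_event (m r₁ r₂ n₁ n₂ : ℝ)
    (hm : 1 ≤ m) (hr₂ : 0 < r₂) (hr : r₂ ≤ r₁)
    (hn₁0 : 0 ≤ n₁) (hn₁ : n₁ ≤ Real.sqrt m) (hn₂ : 0 ≤ n₂) (hsum : 0 < n₁ + n₂) :
    (min m n₂ * r₂ + min n₁ (max (m - n₂) 0) * r₁) /
        (min m n₁ * r₁ + min n₂ (max (m - n₁) 0) * r₂)
      ≥ 1 - Real.sqrt m * (r₁ - r₂) / (Real.sqrt m * r₁ + (m - Real.sqrt m) * r₂) := by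
  set s := Real.sqrt m with hs
  have hm0 : (0:ℝ) ≤ m := by linarith
  have hss : s * s = m := Real.mul_self_sqrt hm0
  have hs0 : 0 ≤ s := Real.sqrt_nonneg m
  have hs1 : 1 ≤ s := by nlinarith
  have hsm : s ≤ m := by nlinarith
  have hr1 : 0 < r₁ := lt_of_lt_of_le hr₂ hr
  have hD : 0 < s * r₁ + (m - s) * r₂ := by nlinarith
  have hrhs : 1 - s * (r₁ - r₂) / (s * r₁ + (m - s) * r₂)
      = m * r₂ / (s * r₁ + (m - s) * r₂) := by
    rw [eq_div_iff hD.ne', sub_mul, div_mul_cancel₀ _ hD.ne']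
    ring
  rw [hrhs]
  have hn₁m : n₁ ≤ m := le_trans hn₁ hsm
  have hmin1 : min m n₁ = n₁ := min_eq_right hn₁m
  have hmax1 : max (m - n₁) 0 = m - n₁ := max_eq_left (by linarith)
  rw [hmin1, hmax1]
  by_cases hc : n₁ + n₂ ≤ m
  · have h1 : min m n₂ = n₂ := min_eq_right (by linarith)
    have h2 : max (m - n₂) 0 = m - n₂ := max_eq_left (by linarith)
    have h3 : min n₁ (m - n₂) = n₁ := min_eq_left (by linarith)
    have h4 : min n₂ (m - n₁) = n₂ := min_eq_left (by linarith)
    rw [h1, h2, h3, h4]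
    have hB : 0 < n₁ * r₁ + n₂ * r₂ := by nlinarith
    have hone : (n₂ * r₂ + n₁ * r₁) / (n₁ * r₁ + n₂ * r₂) = 1 := by
      rw [div_eq_one_iff_eq (by linarith)]; ring
    rw [hone, ge_iff_le, div_le_one hD]
    nlinarith
  · push_neg at hc
    have h4 : min n₂ (m - n₁) = m - n₁ := min_eq_right (by linarith)
    rw [h4]
    have hB : 0 < n₁ * r₁ + (m - n₁) * r₂ := by nlinarith
    have hBD : n₁ * r₁ + (m - n₁) * r₂ ≤ s * r₁ + (m - s) * r₂ := by nlinarith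
    have hA : m * r₂ ≤ min m n₂ * r₂ + min n₁ (max (m - n₂) 0) * r₁ := by
      by_cases hc2 : n₂ ≤ m
      · have h1 : min m n₂ = n₂ := min_eq_right hc2
        have h2 : max (m - n₂) 0 = m - n₂ := max_eq_left (by linarith)
        have h3 : min n₁ (m - n₂) = m - n₂ := min_eq_right (by linarith)
        rw [h1, h2, h3]; nlinarith
      · push_neg at hc2
        have h1 : min m n₂ = m := min_eq_left (by linarith)
        have h2 : max (m - n₂) 0 = 0 := max_eq_right (by linarith)
        have h3 : min n₁ 0 = 0 := min_eq_right hn₁0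
        rw [h1, h2, h3]; nlinarith
    rw [ge_iff_le, div_le_div_iff₀ hD hB]
    linarith [mul_le_mul_of_nonneg_left hBD (mul_nonneg hm0 hr₂.le),
      mul_le_mul_of_nonneg_right hA hD.le]
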